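/- Let G be a finite simple graph, let I be a maximum independent set of G, let A ⊆ V(G), and set T = I ∩ A. Then α(G) = α(G[V(G) ∖ (A ∪ N(T))]) + |T|. -/

import Mathlib

/-- A finset of vertices is an independent set of `G`: no two of its vertices are adjacent. -/
def IsIndepSet {V : Type*} (G : SimpleGraph V) (s : Finset V) : Prop :=
  ∀ v ∈ s, ∀ w ∈ s, ¬ G.Adj v w

-- `alphaOn G A` is the independence number of the induced subgraph `G[A]`,
-- i.e. the maximum size of an independent set of `G` contained in `A`.
open Classical in
noncomputable def alphaOn {V : Type*} (G : SimpleGraph V) (A : Finset V) : ℕ :=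
  (A.powerset.filter (fun s => IsIndepSet G s)).sup Finset.card

/-- `alpha G` is the independence number of `G`. -/
noncomputable def alpha {V : Type*} [Fintype V] (G : SimpleGraph V) : ℕ :=
  alphaOn G Finset.univ

-- `nbrFinset G T = (⋃ v ∈ T, N(v)) \ T`, the (open) neighborhood of a vertex set `T`.
open Classical in
noncomputable def nbrFinset {V : Type*} [Fintype V] (G : SimpleGraph V) (T : Finset V) : Finset V :=
  (Finset.univ.filter (fun v => ∃ u ∈ T, G.Adj u v)) \ T

-- `boundary G R` is the set of vertices of `R` having a neighbor outside `R`.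
open Classical in
noncomputable def boundary {V : Type*} [Fintype V] (G : SimpleGraph V) (R : Finset V) : Finset V :=
  R.filter (fun v => ∃ u, u ∉ R ∧ G.Adj v u)

-- `alphaRestricted G R S` is the maximum size of an independent set `J` of the induced
-- subgraph `G[R]` satisfying `J ∩ ∂R = S`.
open Classical in
noncomputable def alphaRestricted {V : Type*} [Fintype V] (G : SimpleGraph V) (R S : Finset V) : ℕ :=
  (R.powerset.filter (fun J => IsIndepSet G J ∧ J ∩ boundary G R = S)).sup Finset.card

-- `maxIndepWithBoundary G R S` is the maximum size of an independent set `I` of `G`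
-- satisfying `I ∩ ∂R = S`.
open Classical in
noncomputable def maxIndepWithBoundary {V : Type*} [Fintype V] (G : SimpleGraph V) (R S : Finset V) : ℕ :=
  (Finset.univ.powerset.filter (fun I => IsIndepSet G I ∧ I ∩ boundary G R = S)).sup Finset.card

lemma le_alphaOn {V : Type*} (G : SimpleGraph V) (A s : Finset V)
    (hs : s ⊆ A) (hind : IsIndepSet G s) : s.card ≤ alphaOn G A := by
  classical
  apply Finset.le_sup
  simp only [Finset.mem_filter, Finset.mem_powerset]
  exact ⟨hs, hind⟩

lemma alphaOn_exists {V : Type*} (G : SimpleGraph V) (A : Finset V) :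
    ∃ s ⊆ A, IsIndepSet G s ∧ s.card = alphaOn G A := by
  classical
  obtain ⟨s, hs, h⟩ := Finset.exists_mem_eq_sup
    (A.powerset.filter (fun s => IsIndepSet G s))
    ⟨∅, Finset.mem_filter.mpr ⟨Finset.empty_mem_powerset _, fun v hv => by simp at hv⟩⟩ Finset.card
  simp only [Finset.mem_filter, Finset.mem_powerset] at hs
  exact ⟨s, hs.1, hs.2, h.symm⟩

/-- Let `I` be a maximum independent set of `G`, `A ⊆ V(G)`, `T = I ∩ A`.
Then `α(G) = α(G[V(G) ∖ (A ∪ N(T))]) + |T|`. -/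
theorem stmt_1 {V : Type*} [Fintype V] [DecidableEq V] (G : SimpleGraph V)
    (I : Finset V) (hI : IsIndepSet G I) (hImax : I.card = alpha G)
    (A : Finset V) :
    alpha G = alphaOn G (Finset.univ \ (A ∪ nbrFinset G (I ∩ A))) + (I ∩ A).card := by
  classical
  set T := I ∩ A with hT
  apply le_antisymm
  · have hsub : I \ T ⊆ Finset.univ \ (A ∪ nbrFinset G T) := by
      intro v hv
      obtain ⟨hvI, hvT⟩ := Finset.mem_sdiff.mp hv
      simp only [Finset.mem_sdiff, Finset.mem_univ, true_and, Finset.mem_union, not_or]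
      refine ⟨fun hvA => hvT (Finset.mem_inter.mpr ⟨hvI, hvA⟩), fun hvN => ?_⟩
      simp only [nbrFinset, Finset.mem_sdiff, Finset.mem_filter, Finset.mem_univ,
        true_and] at hvN
      obtain ⟨⟨u, huT, hadj⟩, _⟩ := hvN
      exact hI u (Finset.mem_inter.mp huT).1 v hvI hadj
    have hind : IsIndepSet G (I \ T) := fun v hv w hw =>
      hI v (Finset.mem_sdiff.mp hv).1 w (Finset.mem_sdiff.mp hw).1
    have h1 := le_alphaOn G _ _ hsub hind
    have h2 : (I \ T).card + T.card = I.card :=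
      Finset.card_sdiff_add_card_eq_card Finset.inter_subset_left
    omega
  · obtain ⟨J, hJsub, hJind, hJcard⟩ :=
      alphaOn_exists G (Finset.univ \ (A ∪ nbrFinset G T))
    have hTI : T ⊆ I := Finset.inter_subset_left
    have hdis : Disjoint J T := by
      rw [Finset.disjoint_left]
      intro v hvJ hvT
      have h := hJsub hvJ
      simp only [Finset.mem_sdiff, Finset.mem_union, not_or] at h
      exact h.2.1 (Finset.mem_inter.mp hvT).2
    have hnb : ∀ v ∈ J, ∀ w ∈ T, ¬ G.Adj v w := by
      intro v hvJ w hwT hadj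
      have h := hJsub hvJ
      simp only [Finset.mem_sdiff, Finset.mem_union, not_or] at h
      apply h.2.2
      simp only [nbrFinset, Finset.mem_sdiff, Finset.mem_filter, Finset.mem_univ, true_and]
      exact ⟨⟨w, hwT, hadj.symm⟩, fun hvT => Finset.disjoint_left.mp hdis hvJ hvT⟩
    have hind : IsIndepSet G (J ∪ T) := by
      intro v hv w hw hadj
      rcases Finset.mem_union.mp hv with hvJ | hvT <;>
        rcases Finset.mem_union.mp hw with hwJ | hwT
      · exact hJind v hvJ w hwJ hadj
      · exact hnb v hvJ w hwT hadj
      · exact hnb w hwJ v hvT hadj.symm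
      · exact hI v (hTI hvT) w (hTI hwT) hadj
    have hcard : (J ∪ T).card = J.card + T.card := Finset.card_union_of_disjoint hdis
    have hle := le_alphaOn G Finset.univ (J ∪ T) (Finset.subset_univ _) hind
    show alphaOn G _ + T.card ≤ alpha G
    unfold alpha
    omega
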